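/- Let (X, μ) be a probability space and T : X → X a measure-preserving transformation which is mixing, i.e. for all measurable sets A, B one has μ(A ∩ T⁻ⁿB) → μ(A)·μ(B) as n → ∞. Suppose f ∈ L²(μ) is such that there exists a constant C ≥ 0 with ‖f + f∘T + ⋯ + f∘Tⁿ‖_{L²(μ)} ≤ C for all n ≥ 1. Then there exists h ∈ L²(μ) such that f = h − h∘T holds μ-almost everywhere. -/

import Mathlib

open MeasureTheory Filter Function

local notation "⟪" x ", " y "⟫" => @inner ℝ _ _ x y

lemma coboundary_of_bounded_sums {H : Type*} [NormedAddCommGroup H] [InnerProductSpace ℝ H]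
    [CompleteSpace H] (U : H →L[ℝ] H) (f : H) (C : ℝ) (hC : 0 ≤ C)
    (hb : ∀ n, 2 ≤ n → ‖∑ i ∈ Finset.range n, (U ^ i) f‖ ≤ C) :
    ∃ h : H, f = h - U h := by
  set A := ContinuousLinearMap.adjoint U with hA
  set V : H →L[ℝ] H := ContinuousLinearMap.id ℝ H - A with hVdef
  have hadj : ∀ (m : ℕ) (x y : H), ⟪x, (A ^ m) y⟫ = ⟪(U ^ m) x, y⟫ := by
    intro m x y
    have : A ^ m = ContinuousLinearMap.adjoint (U ^ m) := by
      rw [hA, ← ContinuousLinearMap.star_eq_adjoint, ← ContinuousLinearMap.star_eq_adjoint,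
        ← star_pow]
    rw [this, ContinuousLinearMap.adjoint_inner_right]
  -- key identity
  have hid : ∀ (n : ℕ) (g : H),
      ⟪f, g⟫ = ⟪f, (A ^ n) g⟫ + ⟪∑ i ∈ Finset.range n, (U ^ i) f, V g⟫ := by
    intro n g
    induction n with
    | zero => simp
    | succ n ih =>
      have h1 : (A ^ n) (V g) = (A ^ n) g - (A ^ (n + 1)) g := by
        simp [hVdef, pow_succ, ContinuousLinearMap.sub_apply, map_sub]
      have h2 : ⟪f, (A ^ n) (V g)⟫ = ⟪(U ^ n) f, V g⟫ := hadj n f (V g)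
      rw [Finset.sum_range_succ, inner_add_left, ← h2, ih]
      have h3 : ⟪f, (A ^ n) g⟫ = ⟪f, (A ^ (n+1)) g⟫ + ⟪f, (A ^ n) (V g)⟫ := by
        rw [h1, inner_sub_right]; ring
      rw [h3]; ring
  -- the bound |⟪f, g⟫| ≤ C * ‖V g‖
  have hbnd : ∀ g : H, |⟪f, g⟫| ≤ C * ‖V g‖ := by
    intro g
    have key : ∀ N : ℕ, 1 ≤ N → |⟪f, g⟫| ≤ (2 * C * ‖g‖) / N + C * ‖V g‖ := by
      intro N hN
      have sum_id : (N : ℝ) * ⟪f, g⟫ =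
          ⟪∑ i ∈ Finset.range (N + 2), (U ^ i) f - ∑ i ∈ Finset.range 2, (U ^ i) f, g⟫ +
          ∑ n ∈ Finset.range N, ⟪∑ i ∈ Finset.range (n + 2), (U ^ i) f, V g⟫ := by
        have e1 : ∑ i ∈ Finset.range (N + 2), (U ^ i) f - ∑ i ∈ Finset.range 2, (U ^ i) f
            = ∑ n ∈ Finset.range N, (U ^ (2 + n)) f := by
          rw [add_comm N 2, Finset.sum_range_add]; abel
        rw [e1]
        have e2 : ∀ n ∈ Finset.range N, ⟪f, g⟫ - ⟪∑ i ∈ Finset.range (n + 2), (U ^ i) f, V g⟫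
            = ⟪f, (A ^ (n + 2)) g⟫ := by
          intro n _; rw [hid (n + 2) g]; ring
        have e3 : ∑ n ∈ Finset.range N, ⟪(U ^ (2 + n)) f, g⟫
            = ∑ n ∈ Finset.range N, ⟪f, (A ^ (n + 2)) g⟫ := by
          refine Finset.sum_congr rfl fun n _ => ?_
          rw [hadj (n + 2) f g, add_comm 2 n]
        rw [sum_inner, e3, ← Finset.sum_congr rfl e2, Finset.sum_sub_distrib,
          Finset.sum_const, Finset.card_range, nsmul_eq_mul]
        ring
      have hnorm1 : ‖∑ i ∈ Finset.range (N + 2), (U ^ i) f - ∑ i ∈ Finset.range 2, (U ^ i) f‖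
          ≤ 2 * C := by
        calc ‖∑ i ∈ Finset.range (N + 2), (U ^ i) f - ∑ i ∈ Finset.range 2, (U ^ i) f‖
            ≤ ‖∑ i ∈ Finset.range (N + 2), (U ^ i) f‖ + ‖∑ i ∈ Finset.range 2, (U ^ i) f‖ :=
              norm_sub_le _ _
          _ ≤ C + C := add_le_add (hb _ (by omega)) (hb _ le_rfl)
          _ = 2 * C := by ring
      have habs : |(N : ℝ) * ⟪f, g⟫| ≤ 2 * C * ‖g‖ + N * (C * ‖V g‖) := by
        rw [sum_id]
        refine (abs_add_le _ _).trans (add_le_add ?_ ?_)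
        · calc |⟪∑ i ∈ Finset.range (N + 2), (U ^ i) f - ∑ i ∈ Finset.range 2, (U ^ i) f, g⟫|
              ≤ ‖∑ i ∈ Finset.range (N + 2), (U ^ i) f - ∑ i ∈ Finset.range 2, (U ^ i) f‖ * ‖g‖ :=
                abs_real_inner_le_norm _ _
            _ ≤ 2 * C * ‖g‖ := mul_le_mul_of_nonneg_right hnorm1 (norm_nonneg _)
        · calc |∑ n ∈ Finset.range N, ⟪∑ i ∈ Finset.range (n + 2), (U ^ i) f, V g⟫|
              ≤ ∑ n ∈ Finset.range N, |⟪∑ i ∈ Finset.range (n + 2), (U ^ i) f, V g⟫| :=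
                Finset.abs_sum_le_sum_abs _ _
            _ ≤ ∑ n ∈ Finset.range N, C * ‖V g‖ := by
                refine Finset.sum_le_sum fun n _ => ?_
                exact (abs_real_inner_le_norm _ _).trans
                  (mul_le_mul_of_nonneg_right (hb _ (by omega)) (norm_nonneg _))
            _ = N * (C * ‖V g‖) := by simp [Finset.sum_const, nsmul_eq_mul]
      have hNpos : (0 : ℝ) < N := by exact_mod_cast hN
      rw [abs_mul, abs_of_pos hNpos] at habs
      calc |⟪f, g⟫| = ((N : ℝ) * |⟪f, g⟫|) / N := by field_simp
        _ ≤ (2 * C * ‖g‖ + N * (C * ‖V g‖)) / N := by gcongr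
        _ = (2 * C * ‖g‖) / N + C * ‖V g‖ := by field_simp
    have htend : Tendsto (fun N : ℕ => (2 * C * ‖g‖) / N + C * ‖V g‖) atTop
        (nhds (0 + C * ‖V g‖)) :=
      (tendsto_const_div_atTop_nhds_zero_nat _).add tendsto_const_nhds
    rw [zero_add] at htend
    exact ge_of_tendsto htend (eventually_atTop.mpr ⟨1, fun N hN => key N hN⟩)
  -- construct h via Hahn–Banach and Riesz representation
  set Vl : H →ₗ[ℝ] H := (V : H →ₗ[ℝ] H) with hVl
  have hker : LinearMap.ker Vl ≤ LinearMap.ker ((innerSL ℝ f) : H →ₗ[ℝ] ℝ) := by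
    intro g hg
    have hg' : V g = 0 := hg
    have := hbnd g
    rw [hg', norm_zero, mul_zero] at this
    simpa [LinearMap.mem_ker] using abs_nonpos_iff.mp this
  set q : (H ⧸ LinearMap.ker Vl) →ₗ[ℝ] ℝ :=
    (LinearMap.ker Vl).liftQ ((innerSL ℝ f) : H →ₗ[ℝ] ℝ) hker with hq
  set e := Vl.quotKerEquivRange with he
  set ℓ : LinearMap.range Vl →ₗ[ℝ] ℝ := q.comp e.symm.toLinearMap with hℓ
  have hℓ_app : ∀ g : H, ℓ ⟨Vl g, LinearMap.mem_range_self Vl g⟩ = ⟪f, g⟫ := by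
    intro g
    have : e (Submodule.Quotient.mk g) = ⟨Vl g, LinearMap.mem_range_self Vl g⟩ :=
      Subtype.ext (Vl.quotKerEquivRange_apply_mk g)
    have h2 : e.symm ⟨Vl g, LinearMap.mem_range_self Vl g⟩ = Submodule.Quotient.mk g := by
      rw [← this, LinearEquiv.symm_apply_apply]
    simp only [hℓ, LinearMap.comp_apply, LinearEquiv.coe_toLinearMap, h2, hq,
      Submodule.liftQ_apply]
    rfl
  have hℓ_bound : ∀ x : LinearMap.range Vl, ‖ℓ x‖ ≤ C * ‖x‖ := by
    rintro ⟨x, hx⟩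
    obtain ⟨g, rfl⟩ := hx
    rw [hℓ_app g]
    have h3 : |⟪f, g⟫| ≤ C * ‖Vl g‖ := hbnd g
    simpa using h3
  set ℓc : (LinearMap.range Vl : Submodule ℝ H) →L[ℝ] ℝ := LinearMap.mkContinuous ℓ C hℓ_bound
  obtain ⟨G, hG, -⟩ := exists_extension_norm_eq (LinearMap.range Vl) ℓc
  set h := (InnerProductSpace.toDual ℝ H).symm G with hh
  have hhG : ∀ g : H, ⟪h, g⟫ = G g := fun g => InnerProductSpace.toDual_symm_apply
  have main : ∀ g : H, ⟪h - U h - f, g⟫ = 0 := by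
    intro g
    have h1 : ⟪h, V g⟫ = ⟪f, g⟫ := by
      have := hG ⟨Vl g, LinearMap.mem_range_self Vl g⟩
      rw [hhG (V g)]
      calc G (V g) = ℓc ⟨Vl g, LinearMap.mem_range_self Vl g⟩ := this
        _ = ⟪f, g⟫ := hℓ_app g
    have h2 : ⟪h, V g⟫ = ⟪h - U h, g⟫ := by
      rw [hVdef]
      simp only [ContinuousLinearMap.sub_apply, ContinuousLinearMap.id_apply, inner_sub_right,
        inner_sub_left, hA, ContinuousLinearMap.adjoint_inner_right]
    rw [inner_sub_left, ← h2, h1]; ring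
  refine ⟨h, ?_⟩
  have := main (h - U h - f)
  rw [inner_self_eq_zero] at this
  exact (sub_eq_zero.mp this).symm


lemma Lp_coeFn_sum_ae {X : Type*} [MeasurableSpace X] {μ : MeasureTheory.Measure X}
    {ι : Type*} (s : Finset ι) (G : ι → MeasureTheory.Lp ℝ 2 μ) :
    ((∑ i ∈ s, G i : MeasureTheory.Lp ℝ 2 μ) : X → ℝ)
      =ᵐ[μ] fun x => ∑ i ∈ s, (G i : X → ℝ) x := by
  classical
  induction s using Finset.induction with
  | empty => simp; exact MeasureTheory.Lp.coeFn_zero (E := ℝ) (p := 2) (μ := μ)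
  | insert a s hni ih =>
    rw [Finset.sum_insert hni]
    refine (MeasureTheory.Lp.coeFn_add _ _).trans ?_
    filter_upwards [ih] with x hx
    rw [Finset.sum_insert hni, Pi.add_apply, hx]

/-- If `T` is a mixing measure-preserving transformation of a probability
space `(X, μ)` and `f ∈ L²(μ)` has uniformly `L²`-bounded Birkhoff sums
`f + f∘T + ⋯ + f∘Tⁿ` for all `n ≥ 1`, then `f` is an `L²` coboundary:
`f = h - h∘T` a.e. for some `h ∈ L²(μ)`. -/
theorem l2_bounded_birkhoff_sums_coboundary
    {X : Type*} [MeasurableSpace X] (μ : Measure X) [IsProbabilityMeasure μ]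
    (T : X → X) (hT : MeasurePreserving T μ μ)
    (hmix : ∀ A B : Set X, MeasurableSet A → MeasurableSet B →
      Tendsto (fun n : ℕ => μ (A ∩ T^[n] ⁻¹' B)) atTop (nhds (μ A * μ B)))
    (f : X → ℝ) (hf : MemLp f 2 μ)
    (C : ℝ) (hC : 0 ≤ C)
    (hbound : ∀ n : ℕ, 1 ≤ n →
      eLpNorm (fun x => ∑ i ∈ Finset.range (n + 1), f (T^[i] x)) 2 μ ≤ ENNReal.ofReal C) :
    ∃ h : X → ℝ, MemLp h 2 μ ∧ ∀ᵐ x ∂μ, f x = h x - h (T x) := by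
  set U : Lp ℝ 2 μ →L[ℝ] Lp ℝ 2 μ :=
    (Lp.compMeasurePreservingₗᵢ ℝ T hT : Lp ℝ 2 μ →ₗᵢ[ℝ] Lp ℝ 2 μ).toContinuousLinearMap with hU
  have hUcoe : ∀ g : Lp ℝ 2 μ, (U g : X → ℝ) =ᵐ[μ] (g : X → ℝ) ∘ T :=
    fun g => Lp.coeFn_compMeasurePreserving g hT
  set F : Lp ℝ 2 μ := hf.toLp f with hF
  have hFcoe : (F : X → ℝ) =ᵐ[μ] f := MemLp.coeFn_toLp hf
  -- iterated powers
  have hpow : ∀ i : ℕ, ((U ^ i) F : X → ℝ) =ᵐ[μ] fun x => f (T^[i] x) := by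
    intro i
    induction i with
    | zero => simpa using hFcoe
    | succ i ih =>
      have h1 : (U ^ (i + 1)) F = U ((U ^ i) F) := by rw [pow_succ']; rfl
      rw [h1]
      refine (hUcoe ((U ^ i) F)).trans ?_
      have h2 : ((U ^ i) F : X → ℝ) ∘ T =ᵐ[μ] (fun x => f (T^[i] x)) ∘ T :=
        hT.quasiMeasurePreserving.ae_eq_comp ih
      refine h2.trans ?_
      filter_upwards with x
      simp [Function.comp, Function.iterate_succ_apply]
  have hsum : ∀ n : ℕ, ((∑ i ∈ Finset.range n, (U ^ i) F : Lp ℝ 2 μ) : X → ℝ)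
      =ᵐ[μ] fun x => ∑ i ∈ Finset.range n, f (T^[i] x) := by
    intro n
    refine (Lp_coeFn_sum_ae _ _).trans ?_
    have : ∀ᵐ x ∂μ, ∀ i ∈ Finset.range n, ((U ^ i) F : X → ℝ) x = f (T^[i] x) := by
      rw [Filter.eventually_all_finset]
      intro i _
      exact hpow i
    filter_upwards [this] with x hx
    exact Finset.sum_congr rfl hx
  have hb : ∀ n, 2 ≤ n → ‖∑ i ∈ Finset.range n, (U ^ i) F‖ ≤ C := by
    intro n hn
    rw [Lp.norm_def]
    refine ENNReal.toReal_le_of_le_ofReal hC ?_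
    rw [eLpNorm_congr_ae (hsum n)]
    have := hbound (n - 1) (by omega)
    rwa [Nat.sub_add_cancel (by omega)] at this
  obtain ⟨h, hfh⟩ := coboundary_of_bounded_sums U F C hC hb
  refine ⟨(h : X → ℝ), Lp.memLp h, ?_⟩
  have h1 : ((h - U h : Lp ℝ 2 μ) : X → ℝ) =ᵐ[μ] (h : X → ℝ) - (U h : X → ℝ) :=
    Lp.coeFn_sub h (U h)
  have h2 : (F : X → ℝ) =ᵐ[μ] ((h - U h : Lp ℝ 2 μ) : X → ℝ) := by rw [← hfh]
  filter_upwards [hFcoe, h1, h2, hUcoe h] with x e1 e2 e3 e4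
  have : f x = (h : X → ℝ) x - (U h : X → ℝ) x := by
    rw [← e1, e3, e2]; rfl
  rw [this, e4]; rfl
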